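/- Suppose f + 1 = λm and let χ be a multiplicative character of order m on F_q. Then M_{q,m} is a (q, f + 1, λ)-difference set in F_q if and only if Σ_{t=1, t≠s}^{m−1} χ^t(−1) G_q(χ^t) G_q(χ^{s−t}) = (1 − m)(1 + χ^s(−1)) G_q(χ^s) for every s = 1, ..., m − 1. -/

import Mathlib

/-- `D` is a `(q, k, l)`-difference set in the additive group `F` (with `q = |F|`). -/
def IsDiffSet {F : Type*} [AddGroup F] (D : Set F) (k l : ℕ) : Prop :=
  D.ncard = k ∧
    ∀ a : F, a ≠ 0 → {x : F × F | x.1 ∈ D ∧ x.2 ∈ D ∧ x.1 - x.2 = a}.ncard = l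

/-- The set of nonzero `m`-th powers in `F`. -/
def Hset (F : Type*) [Field F] (m : ℕ) : Set F :=
  {x : F | x ≠ 0 ∧ ∃ y : F, y ^ m = x}

/-- The set of `m`-th powers in `F`, including `0`. -/
def Mset (F : Type*) [Field F] (m : ℕ) : Set F :=
  Hset F m ∪ {0}

/-- The Gauss sum `G_q(χ) = ∑ α ∈ F_q, χ(α) ζ_p^{Tr(α)}`, where `Tr` is the trace map
from `F_q` to `F_p` and `ζ_p = e^{2πi/p}`. -/
noncomputable def Gsum (p : ℕ) (F : Type*) [Field F] [Fintype F] [Algebra (ZMod p) F]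
    (χ : MulChar F ℂ) : ℂ :=
  ∑ α : F, χ α *
    Complex.exp (2 * Real.pi * Complex.I * ((Algebra.trace (ZMod p) F α).val : ℂ) / p)

set_option linter.unusedSectionVars false
open Finset AddChar

section Aux

variable {F : Type*} [Field F] [Fintype F]

lemma zpow_mulchar_congr {χ : MulChar F ℂ} {m : ℕ} (hχm : χ ^ (m : ℤ) = 1) {a b : ℤ}
    (h : (m : ℤ) ∣ a - b) : χ ^ a = χ ^ b := by
  obtain ⟨k, hk⟩ := h
  have ha : a = b + (m : ℤ) * k := by linarith
  rw [ha, zpow_add, zpow_mul, hχm, one_zpow, mul_one]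

lemma chi_pow_m {χ : MulChar F ℂ} {m : ℕ} (hχ : orderOf χ = m) : χ ^ m = 1 := by
  rw [← hχ]; exact pow_orderOf_eq_one χ

lemma mem_Hset_iff {m : ℕ} (hm : 0 < m) {χ : MulChar F ℂ} (hχ : orderOf χ = m)
    {x : F} (hx : x ≠ 0) : x ∈ Hset F m ↔ χ x = 1 := by
  have hχm : χ ^ m = 1 := chi_pow_m hχ
  obtain ⟨g, hg⟩ := IsCyclic.exists_generator (α := Fˣ)
  set u := MulChar.equivToUnitHom χ with hu
  constructor
  · rintro ⟨-, y, rfl⟩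
    have hy : y ≠ 0 := by
      rintro rfl; exact hx (by simp [hm.ne'])
    calc χ (y ^ m) = (χ y) ^ m := map_pow χ y m
      _ = (χ ^ m) y := (MulChar.pow_apply' χ hm.ne' y).symm
      _ = 1 := by rw [hχm, MulChar.one_apply hy.isUnit]
  · intro h1
    set xu : Fˣ := Units.mk0 x hx with hxu
    have hval : ∀ a : Fˣ, (u a : ℂ) = χ (a : F) := fun a => MulChar.coe_equivToUnitHom χ a
    have hxu1 : u xu = 1 := Units.ext (by rw [hval]; simpa [hxu] using h1)
    obtain ⟨j, hj⟩ := hg xu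
    -- orderOf (u g) = m
    have hugm : (u g) ^ m = 1 := by
      apply Units.ext
      rw [Units.val_pow_eq_pow_val, hval, ← MulChar.pow_apply' χ hm.ne', hχm,
        MulChar.one_apply g.isUnit]
      simp
    have hdvd1 : orderOf (u g) ∣ m := orderOf_dvd_of_pow_eq_one hugm
    have hdvd2 : m ∣ orderOf (u g) := by
      rw [← hχ]
      apply orderOf_dvd_of_pow_eq_one
      ext a
      obtain ⟨i, hi⟩ := hg a
      have hi' : g ^ i = a := hi
      have h0 : χ (a : F) = (u a : ℂ) := (hval a).symm
      have hkey : (u a) ^ (orderOf (u g)) = 1 := by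
        rw [← hi', map_zpow, ← zpow_natCast ((u g) ^ i), ← zpow_mul, mul_comm, zpow_mul,
          zpow_natCast, pow_orderOf_eq_one, one_zpow]
      rw [MulChar.pow_apply_coe, MulChar.one_apply_coe, h0]
      rw [← Units.val_pow_eq_pow_val, hkey, Units.val_one]
    have hord : orderOf (u g) = m := Nat.dvd_antisymm hdvd1 hdvd2
    have hjdvd : (m : ℤ) ∣ j := by
      have hj' : g ^ j = xu := hj
      rw [← hord, orderOf_dvd_iff_zpow_eq_one, ← map_zpow, hj', hxu1]
    obtain ⟨j', hj'⟩ := hjdvd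
    refine ⟨hx, ((g ^ j' : Fˣ) : F), ?_⟩
    have hj2 : g ^ j = xu := hj
    have : (g ^ j') ^ (m : ℕ) = xu := by
      rw [← hj2, hj', ← zpow_natCast (g ^ j'), ← zpow_mul, mul_comm]
    calc ((g ^ j' : Fˣ) : F) ^ m = (((g ^ j') ^ m : Fˣ) : F) := by
          rw [Units.val_pow_eq_pow_val]
      _ = x := by rw [this, hxu]; rfl

end Aux

section Aux2

variable {F : Type*} [Field F] [Fintype F] [DecidableEq F]

lemma zero_not_mem_Hset {m : ℕ} : (0 : F) ∉ Hset F m := fun h => h.1 rfl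

lemma sum_chipow {m : ℕ} (hm : 0 < m) {χ : MulChar F ℂ} (hχ : orderOf χ = m)
    {x : F} (hx : x ≠ 0) [Decidable (x ∈ Hset F m)] :
    ∑ s ∈ Finset.range m, (χ ^ s) x = if x ∈ Hset F m then (m : ℂ) else 0 := by
  have hzm : (χ x) ^ m = 1 := by
    rw [← MulChar.pow_apply' χ hm.ne', chi_pow_m hχ, MulChar.one_apply hx.isUnit]
  have hconv : ∀ s ∈ Finset.range m, (χ ^ s) x = (χ x) ^ s := by
    intro s _
    rcases Nat.eq_zero_or_pos s with rfl | hs'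
    · simp [MulChar.one_apply hx.isUnit]
    · exact MulChar.pow_apply' χ hs'.ne' x
  rw [Finset.sum_congr rfl hconv]
  by_cases h1 : χ x = 1
  · rw [if_pos ((mem_Hset_iff hm hχ hx).mpr h1)]
    simp [h1]
  · rw [if_neg (fun hH => h1 ((mem_Hset_iff hm hχ hx).mp hH))]
    rw [geom_sum_eq h1, hzm, sub_self, zero_div]

lemma sum_one_mulchar : ∑ x : F, (1 : MulChar F ℂ) x = (Fintype.card F : ℂ) - 1 := by
  rw [show (univ : Finset F) = insert (0 : F) (univ.erase 0) from
    (Finset.insert_erase (mem_univ 0)).symm, Finset.sum_insert (notMem_erase _ _)]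
  rw [MulChar.map_zero, zero_add]
  rw [Finset.sum_congr rfl (fun x hx => MulChar.one_apply (mem_erase.mp hx).1.isUnit)]
  rw [Finset.sum_const, Finset.card_erase_of_mem (mem_univ 0), Finset.card_univ, nsmul_eq_mul,
    mul_one, Nat.cast_sub Fintype.card_pos]
  norm_num

lemma range_eq_insert_Icc {m : ℕ} (hm : 0 < m) :
    Finset.range m = insert 0 (Finset.Icc 1 (m - 1)) := by
  ext s
  simp only [Finset.mem_range, Finset.mem_insert, Finset.mem_Icc]
  omega

lemma chipow_ne_one {m : ℕ} {χ : MulChar F ℂ} (hχ : orderOf χ = m) {s : ℕ}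
    (hs : s ∈ Finset.Icc 1 (m - 1)) : χ ^ s ≠ 1 := by
  rw [Finset.mem_Icc] at hs
  exact pow_ne_one_of_lt_orderOf (by omega) (by omega)

lemma Hcard {m f : ℕ} (hm : 0 < m) {χ : MulChar F ℂ} (hχ : orderOf χ = m)
    (hcard : Fintype.card F = m * f + 1) [DecidablePred (· ∈ Hset F m)] :
    (univ.filter (· ∈ Hset F m)).card = f := by
  have key : ∑ x : F, ∑ s ∈ Finset.range m, (χ ^ s) x
      = (m : ℂ) * (univ.filter (· ∈ Hset F m)).card := by
    rw [Finset.sum_congr rfl (fun x _ => ?_)]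
    case _ =>
      calc ∑ x : F, (if x ∈ Hset F m then (m : ℂ) else 0)
          = ∑ x ∈ univ.filter (· ∈ Hset F m), (m : ℂ) := (Finset.sum_filter _ _).symm
        _ = (univ.filter (· ∈ Hset F m)).card • (m : ℂ) := Finset.sum_const _
        _ = (m : ℂ) * (univ.filter (· ∈ Hset F m)).card := by
            rw [nsmul_eq_mul, mul_comm]
    case _ =>
      by_cases hx : x = 0
      · subst hx
        rw [if_neg zero_not_mem_Hset]
        exact Finset.sum_eq_zero fun s _ => MulChar.map_zero _
      · exact sum_chipow hm hχ hx
  rw [Finset.sum_comm] at key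
  have other : ∑ s ∈ Finset.range m, ∑ x : F, (χ ^ s) x = (Fintype.card F : ℂ) - 1 := by
    rw [range_eq_insert_Icc hm, Finset.sum_insert (by simp)]
    rw [Finset.sum_eq_zero (fun s hs => MulChar.sum_eq_zero_of_ne_one (chipow_ne_one hχ hs))]
    rw [pow_zero, sum_one_mulchar, add_zero]
  rw [other, hcard] at key
  have : (m : ℂ) * (f : ℂ) = (m : ℂ) * (univ.filter (· ∈ Hset F m)).card := by
    rw [← key]; push_cast; ring
  have hmne : (m : ℂ) ≠ 0 := Nat.cast_ne_zero.mpr hm.ne'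
  have := mul_left_cancel₀ hmne this
  exact_mod_cast this.symm

lemma Dcard {m f : ℕ} (hm : 0 < m) {χ : MulChar F ℂ} (hχ : orderOf χ = m)
    (hcard : Fintype.card F = m * f + 1) [DecidablePred (· ∈ Hset F m)]
    [DecidablePred (· ∈ Mset F m)] :
    (univ.filter (· ∈ Mset F m)).card = f + 1 := by
  have : univ.filter (· ∈ Mset F m) = insert 0 (univ.filter (· ∈ Hset F m)) := by
    ext x
    simp only [Finset.mem_filter, mem_univ, true_and, Finset.mem_insert, Mset, Set.mem_union,
      Set.mem_singleton_iff]
    tauto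
  rw [this, Finset.card_insert_of_notMem (by simp [zero_not_mem_Hset]),
    Hcard hm hχ hcard]

lemma filter_Mset {m : ℕ} [DecidablePred (· ∈ Hset F m)] [DecidablePred (· ∈ Mset F m)] :
    univ.filter (· ∈ Mset F m) = insert 0 (univ.filter (· ∈ Hset F m)) := by
  ext x
  simp only [Finset.mem_filter, mem_univ, true_and, Finset.mem_insert, Mset, Set.mem_union,
    Set.mem_singleton_iff]
  tauto

end Aux2

section Aux3

variable {F : Type*} [Field F] [Fintype F] [DecidableEq F]
variable {ψ : AddChar F ℂ}

lemma sum_psi_mul (hψ : ψ.IsPrimitive) (x : F) :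
    ∑ c : F, ψ (c * x) = if x = 0 then (Fintype.card F : ℂ) else 0 := by
  rw [AddChar.sum_mulShift x hψ]
  split <;> simp

lemma sum_psi_eq_zero (hψ : ψ.IsPrimitive) {c : F} (hc : c ≠ 0) :
    ∑ a : F, ψ (c * a) = 0 := by
  have h := sum_psi_mul hψ c
  rw [if_neg hc] at h
  rw [← h]
  exact Finset.sum_congr rfl fun a _ => by rw [mul_comm]

lemma sum_psi_erase (hψ : ψ.IsPrimitive) {c : F} (hc : c ≠ 0) :
    ∑ a ∈ univ.erase 0, ψ (c * a) = -1 := by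
  have h := sum_psi_eq_zero hψ hc
  rw [show (univ : Finset F) = insert (0 : F) (univ.erase 0) from
    (Finset.insert_erase (mem_univ 0)).symm, Finset.sum_insert (notMem_erase _ _)] at h
  simp only [mul_zero, AddChar.map_zero_eq_one] at h
  linear_combination h

lemma mulchar_ne_zero (χ' : MulChar F ℂ) {c : F} (hc : c ≠ 0) : χ' c ≠ 0 := by
  have h := MulChar.coe_equivToUnitHom χ' (Units.mk0 c hc)
  simp only [Units.val_mk0] at h
  rw [← h]
  exact (MulChar.equivToUnitHom χ' (Units.mk0 c hc)).ne_zero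

lemma gaussSum_shift (χ' : MulChar F ℂ) {c : F} (hc : c ≠ 0) :
    ∑ x : F, χ' x * ψ (c * x) = ((χ' c)⁻¹) * gaussSum χ' ψ := by
  have h := gaussSum_mulShift χ' ψ (Units.mk0 c hc)
  have h2 : gaussSum χ' (ψ.mulShift (Units.mk0 c hc)) = ∑ x : F, χ' x * ψ (c * x) := by
    unfold gaussSum
    exact Finset.sum_congr rfl fun x _ => by rw [AddChar.mulShift_apply]; norm_num
  rw [h2] at h
  field_simp [mulchar_ne_zero χ' hc]
  rw [mul_comm] at h
  simpa using h

lemma S_expand {m : ℕ} (hm : 0 < m) {χ : MulChar F ℂ} (hχ : orderOf χ = m)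
    (hψ : ψ.IsPrimitive)
    [DecidablePred (· ∈ Hset F m)] [DecidablePred (· ∈ Mset F m)] {c : F} (hc : c ≠ 0) :
    (m : ℂ) * ∑ x ∈ univ.filter (· ∈ Mset F m), ψ (c * x)
      = ((m : ℂ) - 1) + ∑ s ∈ Finset.Icc 1 (m - 1), ((χ ^ s) c)⁻¹ * gaussSum (χ ^ s) ψ := by
  rw [filter_Mset, Finset.sum_insert (by simp [zero_not_mem_Hset])]
  have key : (m : ℂ) * ∑ x ∈ univ.filter (· ∈ Hset F m), ψ (c * x)
      = ∑ x : F, (∑ s ∈ Finset.range m, (χ ^ s) x) * ψ (c * x) := by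
    rw [Finset.mul_sum]
    rw [← Finset.sum_subset (Finset.subset_univ (univ.filter (· ∈ Hset F m)))]
    · apply Finset.sum_congr rfl
      intro x hx
      rw [Finset.mem_filter] at hx
      have hx0 : x ≠ 0 := fun h => zero_not_mem_Hset (h ▸ hx.2)
      rw [sum_chipow hm hχ hx0, if_pos hx.2]
    · intro x _ hx
      rw [Finset.mem_filter] at hx
      by_cases hx0 : x = 0
      · subst hx0
        rw [Finset.sum_eq_zero (fun s _ => MulChar.map_zero _), zero_mul]
      · rw [sum_chipow hm hχ hx0, if_neg (by tauto), zero_mul]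
  have swap : ∑ x : F, (∑ s ∈ Finset.range m, (χ ^ s) x) * ψ (c * x)
      = ∑ s ∈ Finset.range m, ∑ x : F, (χ ^ s) x * ψ (c * x) := by
    rw [Finset.sum_comm]
    exact Finset.sum_congr rfl fun x _ => by rw [Finset.sum_mul]
  have s0 : ∑ x : F, (χ ^ 0) x * ψ (c * x) = -1 := by
    have h1 : ∑ x : F, (χ ^ 0) x * ψ (c * x)
        = ∑ x ∈ univ.erase 0, (χ ^ 0) x * ψ (c * x) := by
      refine (Finset.sum_subset (Finset.erase_subset _ _) ?_).symm
      intro x _ hx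
      have hx0 : x = 0 := by simpa using hx
      rw [hx0, pow_zero, MulChar.map_zero, zero_mul]
    have h2 : ∑ x ∈ univ.erase 0, (χ ^ 0) x * ψ (c * x)
        = ∑ x ∈ univ.erase 0, ψ (c * x) := by
      refine Finset.sum_congr rfl fun x hx => ?_
      rw [pow_zero, MulChar.one_apply (mem_erase.mp hx).1.isUnit, one_mul]
    rw [h1, h2, sum_psi_erase hψ hc]
  have rest : ∀ s ∈ Finset.Icc 1 (m - 1),
      ∑ x : F, (χ ^ s) x * ψ (c * x) = ((χ ^ s) c)⁻¹ * gaussSum (χ ^ s) ψ :=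
    fun s _ => gaussSum_shift (χ ^ s) hc
  have hsum : (m : ℂ) * ∑ x ∈ univ.filter (· ∈ Hset F m), ψ (c * x)
      = -1 + ∑ s ∈ Finset.Icc 1 (m - 1), ((χ ^ s) c)⁻¹ * gaussSum (χ ^ s) ψ := by
    rw [key, swap, range_eq_insert_Icc hm, Finset.sum_insert (by simp), s0,
      Finset.sum_congr rfl rest]
  rw [mul_add, hsum, mul_zero, AddChar.map_zero_eq_one, mul_one]
  ring

end Aux3

section Aux4

variable {F : Type*} [Field F] [Fintype F] [DecidableEq F]
variable {ψ : AddChar F ℂ}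

lemma chi_neg_one_sq (χ' : MulChar F ℂ) : χ' (-1) * χ' (-1) = 1 := by
  rw [← map_mul, neg_mul_neg, one_mul, map_one]

lemma chi_neg_one_inv (χ' : MulChar F ℂ) : (χ' (-1))⁻¹ = χ' (-1) :=
  inv_eq_of_mul_eq_one_right (chi_neg_one_sq χ')

lemma gauss_diag {m : ℕ} {χ : MulChar F ℂ} (hχ : orderOf χ = m)
    (hψ : ψ.IsPrimitive) {s : ℕ} (hs : s ∈ Finset.Icc 1 (m - 1)) :
    (χ ^ (m - s)) (-1) * gaussSum (χ ^ s) ψ * gaussSum (χ ^ (m - s)) ψ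
      = (Fintype.card F : ℂ) := by
  have hsm : s + (m - s) = m := by rw [Finset.mem_Icc] at hs; omega
  have hinv : (χ ^ s)⁻¹ = χ ^ (m - s) := by
    symm
    apply eq_inv_of_mul_eq_one_right
    rw [← pow_add, hsm, chi_pow_m hχ]
  have h := gaussSum_mul_gaussSum_eq_card (chipow_ne_one hχ hs) hψ
  have h2 := mul_gaussSum_inv_eq_gaussSum ((χ ^ s)⁻¹) ψ
  rw [← hinv]
  set z := (χ ^ s)⁻¹ (-1)
  set G1 := gaussSum (χ ^ s) ψ
  set G2 := gaussSum (χ ^ s)⁻¹ ψ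
  set G3 := gaussSum (χ ^ s)⁻¹ ψ⁻¹
  calc z * G1 * G2 = z * G1 * (z * G3) := by rw [h2]
    _ = (z * z) * (G1 * G3) := by ring
    _ = 1 * (Fintype.card F : ℂ) := by rw [chi_neg_one_sq, h]
    _ = _ := one_mul _

lemma chipow_zpow_congr {m : ℕ} {χ : MulChar F ℂ} (hχ : orderOf χ = m) {a : ℕ} {b : ℤ}
    (h : (m : ℤ) ∣ (a : ℤ) - b) : χ ^ a = χ ^ b := by
  have hχm : χ ^ (m : ℤ) = 1 := by
    rw [zpow_natCast, chi_pow_m hχ]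
  rw [show χ ^ a = χ ^ ((a : ℤ)) from (zpow_natCast χ a).symm]
  exact zpow_mulchar_congr hχm h

lemma big_expand {m : ℕ} (hm : 0 < m) {χ : MulChar F ℂ} (hχ : orderOf χ = m)
    (hψ : ψ.IsPrimitive)
    [DecidablePred (· ∈ Hset F m)] [DecidablePred (· ∈ Mset F m)]
    {c : F} (hc : c ≠ 0) :
    (m : ℂ) ^ 2 * ((∑ x ∈ univ.filter (· ∈ Mset F m), ψ (c * x)) *
        (∑ x ∈ univ.filter (· ∈ Mset F m), ψ (-c * x)))
      = ((m : ℂ) - 1) ^ 2 + ((m : ℂ) - 1) * (Fintype.card F : ℂ)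
        + ∑ u ∈ Finset.Icc 1 (m - 1),
            (((m : ℂ) - 1) * (1 + (χ ^ u) (-1)) * gaussSum (χ ^ u) ψ
              + ∑ t ∈ (Finset.Icc 1 (m - 1)).erase u,
                  (χ ^ t) (-1) * gaussSum (χ ^ t) ψ * gaussSum (χ ^ ((u : ℤ) - (t : ℤ))) ψ)
            * ((χ ^ u) c)⁻¹ := by
  set I := Finset.Icc 1 (m - 1) with hI
  set G : ℕ → ℂ := fun s => gaussSum (χ ^ s) ψ with hG
  set q : ℂ := (Fintype.card F : ℂ) with hqdef
  have hc' : -c ≠ 0 := neg_ne_zero.mpr hc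
  have e1 := S_expand hm hχ hψ (c := c) hc
  have e2 := S_expand hm hχ hψ (c := -c) hc'
  -- rewrite e2 coefficients
  have e2' : (m : ℂ) * ∑ x ∈ univ.filter (· ∈ Mset F m), ψ (-c * x)
      = ((m : ℂ) - 1) + ∑ t ∈ I, (χ ^ t) (-1) * ((χ ^ t) c)⁻¹ * G t := by
    rw [e2]
    congr 1
    refine Finset.sum_congr rfl fun t _ => ?_
    have : (χ ^ t) (-c) = (χ ^ t) (-1) * (χ ^ t) c := by
      rw [← map_mul, neg_one_mul]
    rw [this, mul_inv, chi_neg_one_inv]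
  set T1 := ∑ s ∈ I, ((χ ^ s) c)⁻¹ * G s with hT1
  set T2 := ∑ t ∈ I, (χ ^ t) (-1) * ((χ ^ t) c)⁻¹ * G t with hT2
  have prod_eq : (m : ℂ) ^ 2 * ((∑ x ∈ univ.filter (· ∈ Mset F m), ψ (c * x)) *
      (∑ x ∈ univ.filter (· ∈ Mset F m), ψ (-c * x)))
      = (((m : ℂ) - 1) + T1) * (((m : ℂ) - 1) + T2) := by
    rw [← e1, ← e2']
    ring
  -- the double sum
  have hdouble : T1 * T2 = ∑ z ∈ I ×ˢ I,
      (χ ^ z.2) (-1) * G z.1 * G z.2 * ((χ ^ (z.1 + z.2)) c)⁻¹ := by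
    rw [hT1, hT2, Finset.sum_mul_sum, ← Finset.sum_product']
    refine Finset.sum_congr rfl fun z _ => ?_
    have : ((χ ^ (z.1 + z.2)) c)⁻¹ = ((χ ^ z.1) c)⁻¹ * ((χ ^ z.2) c)⁻¹ := by
      rw [pow_add, MulChar.mul_apply, mul_inv]
    rw [this]
    ring
  have hsplit : ∑ z ∈ I ×ˢ I, (χ ^ z.2) (-1) * G z.1 * G z.2 * ((χ ^ (z.1 + z.2)) c)⁻¹
      = (∑ z ∈ (I ×ˢ I).filter (fun z => z.1 + z.2 = m),
          (χ ^ z.2) (-1) * G z.1 * G z.2 * ((χ ^ (z.1 + z.2)) c)⁻¹)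
        + ∑ z ∈ (I ×ˢ I).filter (fun z => ¬ z.1 + z.2 = m),
            (χ ^ z.2) (-1) * G z.1 * G z.2 * ((χ ^ (z.1 + z.2)) c)⁻¹ :=
    (Finset.sum_filter_add_sum_filter_not _ _ _).symm
  -- diagonal part
  have hdiagset : (I ×ˢ I).filter (fun z => z.1 + z.2 = m)
      = I.image (fun s => (s, m - s)) := by
    ext z
    simp only [Finset.mem_filter, Finset.mem_product, Finset.mem_image, hI, Finset.mem_Icc]
    obtain ⟨zs, zt⟩ := z
    simp only
    constructor
    · rintro ⟨⟨hs, ht⟩, hsum⟩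
      refine ⟨zs, hs, ?_⟩
      have h9 : m - zs = zt := by omega
      rw [h9]
    · rintro ⟨s, hs, ⟨rfl, rfl⟩⟩
      refine ⟨⟨hs, ⟨by omega, by omega⟩⟩, by omega⟩
  have hdiag : ∑ z ∈ (I ×ˢ I).filter (fun z => z.1 + z.2 = m),
      (χ ^ z.2) (-1) * G z.1 * G z.2 * ((χ ^ (z.1 + z.2)) c)⁻¹ = ((m : ℂ) - 1) * q := by
    rw [hdiagset, Finset.sum_image (fun a _ b _ h => (Prod.mk.injEq _ _ _ _).mp h |>.1)]
    have : ∀ s ∈ I, (χ ^ (m - s)) (-1) * G s * G (m - s) * ((χ ^ (s + (m - s))) c)⁻¹ = q := by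
      intro s hs
      have hsm : s + (m - s) = m := by rw [hI, Finset.mem_Icc] at hs; omega
      rw [hsm, chi_pow_m hχ, MulChar.one_apply hc.isUnit, inv_one, mul_one]
      exact gauss_diag hχ hψ hs
    rw [Finset.sum_congr rfl this, Finset.sum_const, nsmul_eq_mul, hI, Nat.card_Icc]
    have : ((m - 1 + 1 - 1 : ℕ) : ℂ) = (m : ℂ) - 1 := by
      have : m - 1 + 1 - 1 = m - 1 := by omega
      rw [this, Nat.cast_sub hm]
      norm_num
    rw [this]
  -- off-diagonal part
  have hoff : ∑ z ∈ (I ×ˢ I).filter (fun z => ¬ z.1 + z.2 = m),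
      (χ ^ z.2) (-1) * G z.1 * G z.2 * ((χ ^ (z.1 + z.2)) c)⁻¹
      = ∑ u ∈ I, (∑ t ∈ I.erase u,
          (χ ^ t) (-1) * G t * gaussSum (χ ^ ((u : ℤ) - (t : ℤ))) ψ) * ((χ ^ u) c)⁻¹ := by
    have hrhs : ∑ u ∈ I, (∑ t ∈ I.erase u,
        (χ ^ t) (-1) * G t * gaussSum (χ ^ ((u : ℤ) - (t : ℤ))) ψ) * ((χ ^ u) c)⁻¹
        = ∑ p ∈ I.sigma (fun u => I.erase u),
            (χ ^ p.2) (-1) * G p.2 * gaussSum (χ ^ ((p.1 : ℤ) - (p.2 : ℤ))) ψ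
              * ((χ ^ p.1) c)⁻¹ := by
      rw [Finset.sum_sigma]
      exact Finset.sum_congr rfl fun u _ => by rw [Finset.sum_mul]
    rw [hrhs]
    refine Finset.sum_bij' (fun z _ => (⟨if z.1 + z.2 < m then z.1 + z.2 else z.1 + z.2 - m,
        z.2⟩ : Σ _ : ℕ, ℕ))
      (fun p _ => (if p.2 < p.1 then p.1 - p.2 else p.1 + m - p.2, p.2)) ?_ ?_ ?_ ?_ ?_
    · intro z hz
      simp only [Finset.mem_filter, Finset.mem_product, hI, Finset.mem_Icc] at hz
      simp only [Finset.mem_sigma, Finset.mem_erase, hI, Finset.mem_Icc]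
      constructor
      · split <;> omega
      · constructor
        · split <;> omega
        · omega
    · intro p hp
      simp only [Finset.mem_sigma, Finset.mem_erase, hI, Finset.mem_Icc] at hp
      simp only [Finset.mem_filter, Finset.mem_product, hI, Finset.mem_Icc]
      constructor
      · constructor
        · split <;> omega
        · omega
      · split <;> omega
    · intro z hz
      simp only [Finset.mem_filter, Finset.mem_product, hI, Finset.mem_Icc] at hz
      obtain ⟨zs, zt⟩ := z
      simp only [Prod.mk.injEq]
      simp only at hz
      refine ⟨?_, trivial⟩
      split <;> split <;> omega
    · intro p hp
      simp only [Finset.mem_sigma, Finset.mem_erase, hI, Finset.mem_Icc] at hp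
      obtain ⟨pu, pt⟩ := p
      simp only at hp
      simp only [Sigma.mk.inj_iff, heq_eq_eq, and_true]
      split <;> split <;> omega
    · intro z hz
      simp only [Finset.mem_filter, Finset.mem_product, hI, Finset.mem_Icc] at hz
      obtain ⟨⟨⟨hs1, hs2⟩, ht1, ht2⟩, hne⟩ := hz
      set u := if z.1 + z.2 < m then z.1 + z.2 else z.1 + z.2 - m with hu
      have h1 : χ ^ z.1 = χ ^ ((u : ℤ) - (z.2 : ℤ)) := by
        apply chipow_zpow_congr hχ
        rw [hu]
        split
        · exact ⟨0, by push_cast; ring⟩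
        · exact ⟨1, by push_cast [Nat.cast_sub (show m ≤ z.1 + z.2 by omega)]; ring⟩
      have h2 : χ ^ (z.1 + z.2) = χ ^ u := by
        rw [pow_eq_pow_iff_modEq, hχ, hu]
        split
        · rfl
        · symm
          refine (Nat.modEq_iff_dvd' (by omega)).mpr ?_
          have he : z.1 + z.2 - (z.1 + z.2 - m) = m := by omega
          rw [he]
      simp only
      rw [h2, ← h1]
      ring
  -- combine the three I-indexed sums
  have hcomb : ((m : ℂ) - 1) * T1 + ((m : ℂ) - 1) * T2
      + ∑ u ∈ I, (∑ t ∈ I.erase u,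
          (χ ^ t) (-1) * G t * gaussSum (χ ^ ((u : ℤ) - (t : ℤ))) ψ) * ((χ ^ u) c)⁻¹
      = ∑ u ∈ I, (((m : ℂ) - 1) * (1 + (χ ^ u) (-1)) * G u
          + ∑ t ∈ I.erase u, (χ ^ t) (-1) * G t * gaussSum (χ ^ ((u : ℤ) - (t : ℤ))) ψ)
          * ((χ ^ u) c)⁻¹ := by
    rw [hT1, hT2, Finset.mul_sum, Finset.mul_sum, ← Finset.sum_add_distrib,
      ← Finset.sum_add_distrib]
    refine Finset.sum_congr rfl fun u _ => ?_
    ring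
  calc (m : ℂ) ^ 2 * ((∑ x ∈ univ.filter (· ∈ Mset F m), ψ (c * x)) *
      (∑ x ∈ univ.filter (· ∈ Mset F m), ψ (-c * x)))
      = (((m : ℂ) - 1) + T1) * (((m : ℂ) - 1) + T2) := prod_eq
    _ = ((m : ℂ) - 1) ^ 2 + (((m : ℂ) - 1) * T1 + ((m : ℂ) - 1) * T2) + T1 * T2 := by ring
    _ = _ := by
        rw [hdouble, hsplit, hdiag, hoff]
        rw [show ((m : ℂ) - 1) ^ 2 + (((m : ℂ) - 1) * T1 + ((m : ℂ) - 1) * T2)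
            + (((m : ℂ) - 1) * q + ∑ u ∈ I, (∑ t ∈ I.erase u,
              (χ ^ t) (-1) * G t * gaussSum (χ ^ ((u : ℤ) - (t : ℤ))) ψ) * ((χ ^ u) c)⁻¹)
            = ((m : ℂ) - 1) ^ 2 + ((m : ℂ) - 1) * q + (((m : ℂ) - 1) * T1 + ((m : ℂ) - 1) * T2
            + ∑ u ∈ I, (∑ t ∈ I.erase u,
              (χ ^ t) (-1) * G t * gaussSum (χ ^ ((u : ℤ) - (t : ℤ))) ψ) * ((χ ^ u) c)⁻¹)
          from by ring, hcomb]

end Aux4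

section Aux5

variable {F : Type*} [Field F] [Fintype F] [DecidableEq F] {ψ : AddChar F ℂ}

lemma S_mul_S (D : Finset F) (c : F) :
    (∑ x ∈ D, ψ (c * x)) * (∑ x ∈ D, ψ (-c * x))
      = ∑ a : F, (((D ×ˢ D).filter fun z => z.1 - z.2 = a).card : ℂ) * ψ (c * a) := by
  rw [Finset.sum_mul_sum, ← Finset.sum_product']
  have h1 : ∀ z ∈ D ×ˢ D, ψ (c * z.1) * ψ (-c * z.2) = ψ (c * (z.1 - z.2)) := by
    intro z _
    rw [← AddChar.map_add_eq_mul]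
    congr 1
    ring
  rw [Finset.sum_congr rfl h1,
    ← Finset.sum_fiberwise (D ×ˢ D) (fun z => z.1 - z.2) (fun z => ψ (c * (z.1 - z.2)))]
  refine Finset.sum_congr rfl fun a _ => ?_
  have h2 : ∀ z ∈ (D ×ˢ D).filter (fun z => z.1 - z.2 = a),
      ψ (c * (z.1 - z.2)) = ψ (c * a) := by
    intro z hz
    rw [(Finset.mem_filter.mp hz).2]
  rw [Finset.sum_congr rfl h2, Finset.sum_const, nsmul_eq_mul]

lemma Nc_zero (D : Finset F) :
    ((D ×ˢ D).filter fun z => z.1 - z.2 = (0 : F)).card = D.card := by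
  have : ((D ×ˢ D).filter fun z => z.1 - z.2 = (0 : F)) = D.diag := by
    ext z
    simp only [Finset.mem_filter, Finset.mem_product, Finset.mem_diag, sub_eq_zero]
    constructor
    · rintro ⟨⟨h1, _⟩, h3⟩; exact ⟨h1, h3⟩
    · rintro ⟨h1, h3⟩; exact ⟨⟨h1, h3 ▸ h1⟩, h3⟩
  rw [this, Finset.diag_card]

lemma Nc_total (D : Finset F) :
    ∑ a : F, ((D ×ˢ D).filter fun z => z.1 - z.2 = a).card = D.card * D.card := by
  rw [Finset.sum_card_fiberwise_eq_card_filter]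
  rw [Finset.filter_true_of_mem (fun z _ => Finset.mem_univ _), Finset.card_product]

lemma inv_step (hψ : ψ.IsPrimitive) (v : F → ℂ)
    (hv : ∀ c : F, ∑ a : F, v a * ψ (c * a) = 0) (b : F) : v b = 0 := by
  have h0 : ∑ c : F, (∑ a : F, v a * ψ (c * a)) * ψ (c * (-b)) = 0 := by
    rw [Finset.sum_congr rfl (fun c _ => by rw [hv c, zero_mul]), Finset.sum_const_zero]
  have h1 : ∑ c : F, (∑ a : F, v a * ψ (c * a)) * ψ (c * (-b))
      = ∑ a : F, v a * ∑ c : F, ψ (c * (a - b)) := by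
    have e : ∀ c : F, (∑ a : F, v a * ψ (c * a)) * ψ (c * (-b))
        = ∑ a : F, v a * ψ (c * (a - b)) := by
      intro c
      rw [Finset.sum_mul]
      refine Finset.sum_congr rfl fun a _ => ?_
      rw [mul_assoc, ← AddChar.map_add_eq_mul]
      congr 2
      ring
    rw [Finset.sum_congr rfl (fun c _ => e c), Finset.sum_comm]
    exact Finset.sum_congr rfl fun a _ => (Finset.mul_sum _ _ _).symm
  have h2 : ∑ a : F, v a * ∑ c : F, ψ (c * (a - b)) = v b * (Fintype.card F : ℂ) := by
    rw [Finset.sum_congr rfl (fun a _ => by rw [sum_psi_mul hψ (a - b)])]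
    rw [Finset.sum_eq_single_of_mem b (Finset.mem_univ b)]
    · rw [sub_self, if_pos rfl]
    · intro a _ ha
      rw [if_neg (fun h => ha (sub_eq_zero.mp h)), mul_zero]
  have hq0 : (Fintype.card F : ℂ) ≠ 0 := Nat.cast_ne_zero.mpr Fintype.card_pos.ne'
  have := h0
  rw [h1, h2] at this
  exact (mul_eq_zero.mp this).resolve_right hq0

end Aux5

section Aux6

variable {F : Type*} [Field F] [Fintype F] [DecidableEq F]

lemma extraction {m f : ℕ} (hm : 0 < m) (hf : 0 < f) {χ : MulChar F ℂ} (hχ : orderOf χ = m)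
    (hcard : Fintype.card F = m * f + 1) (A : ℕ → ℂ)
    (hA : ∀ c : F, c ≠ 0 → ∑ u ∈ Finset.Icc 1 (m - 1), A u * ((χ ^ u) c)⁻¹ = 0)
    {v : ℕ} (hv : v ∈ Finset.Icc 1 (m - 1)) : A v = 0 := by
  set I := Finset.Icc 1 (m - 1) with hI
  have h0 : ∑ c : F, (χ ^ v) c * (∑ u ∈ I, A u * ((χ ^ u) c)⁻¹) = 0 := by
    refine Finset.sum_eq_zero fun c _ => ?_
    by_cases hc : c = 0
    · rw [hc, MulChar.map_zero, zero_mul]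
    · rw [hA c hc, mul_zero]
  have h1 : ∑ c : F, (χ ^ v) c * (∑ u ∈ I, A u * ((χ ^ u) c)⁻¹)
      = ∑ u ∈ I, A u * (∑ c : F, ((χ ^ v) * (χ ^ u)⁻¹) c) := by
    have e : ∀ c : F, (χ ^ v) c * (∑ u ∈ I, A u * ((χ ^ u) c)⁻¹)
        = ∑ u ∈ I, A u * ((χ ^ v * (χ ^ u)⁻¹) c) := by
      intro c
      rw [Finset.mul_sum]
      refine Finset.sum_congr rfl fun u _ => ?_
      rw [MulChar.mul_apply, MulChar.inv_apply_eq_inv']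
      ring
    rw [Finset.sum_congr rfl (fun c _ => e c), Finset.sum_comm]
    exact Finset.sum_congr rfl fun u _ => (Finset.mul_sum _ _ _).symm
  have h2 : ∀ u ∈ I, u ≠ v → A u * (∑ c : F, ((χ ^ v) * (χ ^ u)⁻¹) c) = 0 := by
    intro u hu hne
    have hne1 : χ ^ v * (χ ^ u)⁻¹ ≠ 1 := by
      rw [Ne, mul_inv_eq_one]
      intro h
      rw [pow_inj_mod, hχ] at h
      rw [hI, Finset.mem_Icc] at hu hv
      rw [Nat.mod_eq_of_lt (by omega), Nat.mod_eq_of_lt (by omega)] at h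
      exact hne (by omega)
    rw [MulChar.sum_eq_zero_of_ne_one hne1, mul_zero]
  have h3 : ∑ c : F, ((χ ^ v) * (χ ^ v)⁻¹) c = (Fintype.card F : ℂ) - 1 := by
    rw [mul_inv_cancel, sum_one_mulchar]
  have h4 := h0
  rw [h1, Finset.sum_eq_single_of_mem v hv h2, h3] at h4
  have hne2 : (Fintype.card F : ℂ) - 1 ≠ 0 := by
    rw [hcard]
    push_cast
    intro h
    have hmf : (m : ℂ) * (f : ℂ) = 0 := by linear_combination h
    rcases mul_eq_zero.mp hmf with h' | h'
    · exact (Nat.cast_ne_zero.mpr hm.ne') h'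
    · exact (Nat.cast_ne_zero.mpr hf.ne') h'
  exact (mul_eq_zero.mp h4).resolve_right hne2

lemma master {m f l : ℕ} (hm : 0 < m) (hf : 0 < f)
    (hcard : Fintype.card F = m * f + 1)
    (hlf : f + 1 = l * m)
    (χ : MulChar F ℂ) (hχ : orderOf χ = m)
    (ψ : AddChar F ℂ) (hψ : ψ.IsPrimitive) :
    IsDiffSet (Mset F m) (f + 1) l ↔
      ∀ s : ℕ, 1 ≤ s → s ≤ m - 1 →
        ∑ t ∈ (Finset.Icc 1 (m - 1)).erase s,
            (χ ^ t) (-1) * gaussSum (χ ^ t) ψ * gaussSum (χ ^ ((s : ℤ) - (t : ℤ))) ψ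
          = (1 - (m : ℂ)) * (1 + (χ ^ s) (-1)) * gaussSum (χ ^ s) ψ := by
  classical
  set I := Finset.Icc 1 (m - 1) with hI
  set D := univ.filter (· ∈ Mset F m) with hD
  have hDcard : D.card = f + 1 := Dcard hm hχ hcard
  set Nc : F → ℕ := fun a => ((D ×ˢ D).filter fun z => z.1 - z.2 = a).card with hNcdef
  set S : F → ℂ := fun c => ∑ x ∈ D, ψ (c * x) with hSdef
  have hc1 : (f : ℂ) + 1 = (l : ℂ) * m := by exact_mod_cast congrArg (Nat.cast (R := ℂ)) hlf
  have hc2 : (Fintype.card F : ℂ) = (m : ℂ) * f + 1 := by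
    exact_mod_cast congrArg (Nat.cast (R := ℂ)) hcard
  have hm0 : (m : ℂ) ≠ 0 := Nat.cast_ne_zero.mpr hm.ne'
  -- step 1
  have pair_eq : ∀ a : F,
      {x : F × F | x.1 ∈ Mset F m ∧ x.2 ∈ Mset F m ∧ x.1 - x.2 = a}.ncard = Nc a := by
    intro a
    have hseteq : {x : F × F | x.1 ∈ Mset F m ∧ x.2 ∈ Mset F m ∧ x.1 - x.2 = a}
        = ↑((D ×ˢ D).filter fun z => z.1 - z.2 = a) := by
      ext z
      simp only [Set.mem_setOf_eq, Finset.coe_filter, Finset.mem_product, hD, Finset.mem_filter,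
        Finset.mem_univ, true_and, Set.mem_setOf_eq]
      tauto
    rw [hseteq, Set.ncard_coe_finset]
  have hMcard : (Mset F m).ncard = f + 1 := by
    have hh : Mset F m = ↑D := by ext x; simp [hD]
    rw [hh, Set.ncard_coe_finset, hDcard]
  have step1 : IsDiffSet (Mset F m) (f + 1) l ↔ ∀ a : F, a ≠ 0 → Nc a = l := by
    constructor
    · rintro ⟨-, h⟩ a ha
      rw [← pair_eq a]
      exact h a ha
    · intro h
      exact ⟨hMcard, fun a ha => by rw [pair_eq a]; exact h a ha⟩
  -- step 2
  have key1 : ∀ c : F, S c * S (-c) = ∑ a : F, (Nc a : ℂ) * ψ (c * a) := fun c => S_mul_S D c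
  have hNczero : Nc 0 = f + 1 := by
    have h9 := Nc_zero D
    rw [hDcard] at h9
    exact h9
  have step2 : (∀ a : F, a ≠ 0 → Nc a = l) ↔
      (∀ c : F, c ≠ 0 → S c * S (-c) = ((f : ℂ) + 1) - l) := by
    constructor
    · intro h c hc
      rw [key1 c]
      rw [show (univ : Finset F) = insert (0 : F) (univ.erase 0) from
        (Finset.insert_erase (mem_univ 0)).symm, Finset.sum_insert (notMem_erase _ _)]
      rw [mul_zero, AddChar.map_zero_eq_one, mul_one]
      have hcongr : ∀ a ∈ univ.erase (0 : F), (Nc a : ℂ) * ψ (c * a) = (l : ℂ) * ψ (c * a) :=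
        fun a ha => by rw [h a (mem_erase.mp ha).1]
      rw [Finset.sum_congr rfl hcongr, ← Finset.mul_sum, sum_psi_erase hψ hc, hNczero]
      push_cast
      ring
    · intro h a ha
      have hv := inv_step hψ
        (fun x => (Nc x : ℂ) - ((l : ℂ) + if x = 0 then ((f : ℂ) + 1) - l else 0)) ?_ a
      · simp only [if_neg ha] at hv
        have : (Nc a : ℂ) = l := by linear_combination hv
        exact_mod_cast this
      · intro c
        have e1 : ∑ x : F, (if x = 0 then ((f : ℂ) + 1) - (l : ℂ) else 0) * ψ (c * x)
            = ((f : ℂ) + 1) - l := by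
          rw [Finset.sum_eq_single_of_mem 0 (mem_univ 0)]
          · rw [if_pos rfl, mul_zero, AddChar.map_zero_eq_one, mul_one]
          · intro x _ hx
            rw [if_neg hx, zero_mul]
        have hsplit : ∑ x : F,
            ((Nc x : ℂ) - ((l : ℂ) + if x = 0 then ((f : ℂ) + 1) - l else 0)) * ψ (c * x)
            = (∑ x : F, (Nc x : ℂ) * ψ (c * x)) - (l : ℂ) * (∑ x : F, ψ (c * x))
              - (((f : ℂ) + 1) - l) := by
          simp only [sub_mul, add_mul]
          rw [Finset.sum_sub_distrib, Finset.sum_add_distrib, e1, ← Finset.mul_sum]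
          ring
        rw [hsplit]
        by_cases hc : c = 0
        · subst hc
          have t1 : ∑ x : F, (Nc x : ℂ) * ψ (0 * x) = ((f : ℂ) + 1) ^ 2 := by
            have : ∀ x ∈ (univ : Finset F), (Nc x : ℂ) * ψ (0 * x) = (Nc x : ℂ) := by
              intro x _
              rw [zero_mul, AddChar.map_zero_eq_one, mul_one]
            rw [Finset.sum_congr rfl this, ← Nat.cast_sum]
            rw [show ∑ x : F, Nc x = D.card * D.card from Nc_total D, hDcard]
            push_cast
            ring
          have t2 : ∑ x : F, ψ (0 * x) = (Fintype.card F : ℂ) := by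
            have : ∀ x ∈ (univ : Finset F), ψ ((0 : F) * x) = 1 := by
              intro x _
              rw [zero_mul, AddChar.map_zero_eq_one]
            rw [Finset.sum_congr rfl this, Finset.sum_const, nsmul_eq_mul, mul_one,
              Finset.card_univ]
          rw [t1, t2, hc2]
          linear_combination (f : ℂ) * hc1
        · rw [← key1 c, h c hc, sum_psi_eq_zero hψ hc]
          ring
  -- step 3
  have hbig : ∀ c : F, c ≠ 0 → (m : ℂ) ^ 2 * (S c * S (-c))
      = ((m : ℂ) - 1) ^ 2 + ((m : ℂ) - 1) * (Fintype.card F : ℂ)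
        + ∑ u ∈ I, (((m : ℂ) - 1) * (1 + (χ ^ u) (-1)) * gaussSum (χ ^ u) ψ
            + ∑ t ∈ I.erase u,
                (χ ^ t) (-1) * gaussSum (χ ^ t) ψ * gaussSum (χ ^ ((u : ℤ) - (t : ℤ))) ψ)
          * ((χ ^ u) c)⁻¹ := fun c hc => big_expand hm hχ hψ hc
  have hconst : ((m : ℂ) - 1) ^ 2 + ((m : ℂ) - 1) * (Fintype.card F : ℂ)
      = (m : ℂ) ^ 2 * (((f : ℂ) + 1) - l) := by
    rw [hc2]
    linear_combination (-(m : ℂ)) * hc1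
  have step3 : (∀ c : F, c ≠ 0 → S c * S (-c) = ((f : ℂ) + 1) - l) ↔
      ∀ s : ℕ, 1 ≤ s → s ≤ m - 1 →
        ∑ t ∈ I.erase s,
            (χ ^ t) (-1) * gaussSum (χ ^ t) ψ * gaussSum (χ ^ ((s : ℤ) - (t : ℤ))) ψ
          = (1 - (m : ℂ)) * (1 + (χ ^ s) (-1)) * gaussSum (χ ^ s) ψ := by
    constructor
    · intro h s hs1 hs2
      have hsI : s ∈ I := by rw [hI, Finset.mem_Icc]; exact ⟨hs1, hs2⟩
      have hz : ∀ c : F, c ≠ 0 → ∑ u ∈ I,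
          (((m : ℂ) - 1) * (1 + (χ ^ u) (-1)) * gaussSum (χ ^ u) ψ
            + ∑ t ∈ I.erase u,
                (χ ^ t) (-1) * gaussSum (χ ^ t) ψ * gaussSum (χ ^ ((u : ℤ) - (t : ℤ))) ψ)
          * ((χ ^ u) c)⁻¹ = 0 := by
        intro c hc
        have hb := hbig c hc
        rw [h c hc, hconst] at hb
        linear_combination -hb
      have hA0 := extraction (F := F) hm hf hχ hcard
        (fun u => ((m : ℂ) - 1) * (1 + (χ ^ u) (-1)) * gaussSum (χ ^ u) ψ
          + ∑ t ∈ I.erase u,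
              (χ ^ t) (-1) * gaussSum (χ ^ t) ψ * gaussSum (χ ^ ((u : ℤ) - (t : ℤ))) ψ)
        hz hsI
      linear_combination hA0
    · intro h c hc
      have hall : ∀ u ∈ I, (((m : ℂ) - 1) * (1 + (χ ^ u) (-1)) * gaussSum (χ ^ u) ψ
          + ∑ t ∈ I.erase u,
              (χ ^ t) (-1) * gaussSum (χ ^ t) ψ * gaussSum (χ ^ ((u : ℤ) - (t : ℤ))) ψ)
          * ((χ ^ u) c)⁻¹ = 0 := by
        intro u hu
        rw [hI, Finset.mem_Icc] at hu
        have := h u hu.1 hu.2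
        have hz : ((m : ℂ) - 1) * (1 + (χ ^ u) (-1)) * gaussSum (χ ^ u) ψ
            + ∑ t ∈ I.erase u,
                (χ ^ t) (-1) * gaussSum (χ ^ t) ψ * gaussSum (χ ^ ((u : ℤ) - (t : ℤ))) ψ = 0 := by
          linear_combination this
        rw [hz, zero_mul]
      have hb := hbig c hc
      rw [Finset.sum_eq_zero hall, add_zero, hconst] at hb
      exact mul_left_cancel₀ (pow_ne_zero 2 hm0) hb
  rw [step1, step2, step3, hI]
end Aux6

theorem stmt5 (p m f l : ℕ) (hp : p.Prime) (hm : 0 < m) (hf : 0 < f)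
    (F : Type*) [Field F] [Fintype F] [Algebra (ZMod p) F]
    (hq : ∃ n : ℕ, 0 < n ∧ Fintype.card F = p ^ n)
    (hcard : Fintype.card F = m * f + 1)
    (hlf : f + 1 = l * m)
    (χ : MulChar F ℂ) (hχ : orderOf χ = m) :
    IsDiffSet (Mset F m) (f + 1) l ↔
      ∀ s : ℕ, 1 ≤ s → s ≤ m - 1 →
        ∑ t ∈ (Finset.Icc 1 (m - 1)).erase s,
            (χ ^ t) (-1) * Gsum p F (χ ^ t) * Gsum p F (χ ^ ((s : ℤ) - (t : ℤ)))
          = (1 - (m : ℂ)) * (1 + (χ ^ s) (-1)) * Gsum p F (χ ^ s) := by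
  classical
  haveI : Fact p.Prime := ⟨hp⟩
  haveI : NeZero p := ⟨hp.ne_zero⟩
  haveI : Fact (1 < p) := ⟨hp.one_lt⟩
  have hζ : (Complex.exp (2 * Real.pi * Complex.I / p)) ^ p = 1 :=
    (Complex.isPrimitiveRoot_exp p hp.ne_zero).pow_eq_one
  set ζ : ℂ := Complex.exp (2 * Real.pi * Complex.I / p) with hzdef
  set ψ : AddChar F ℂ :=
    (AddChar.zmodChar p hζ).compAddMonoidHom (Algebra.trace (ZMod p) F).toAddMonoidHom with hψdef
  haveI : Module.Finite (ZMod p) F := Module.finite_iff_finite.mpr inferInstance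
  obtain ⟨a, ha⟩ := Algebra.trace_surjective (ZMod p) F 1
  have hψa : ψ a ≠ 1 := by
    rw [hψdef]
    simp only [AddChar.compAddMonoidHom_apply, LinearMap.toAddMonoidHom_coe]
    rw [AddChar.zmodChar_apply, ha, ZMod.val_one, pow_one]
    exact (Complex.isPrimitiveRoot_exp p hp.ne_zero).ne_one hp.one_lt
  have hψprim : ψ.IsPrimitive :=
    AddChar.IsPrimitive.of_ne_one (by rw [AddChar.ne_one_iff]; exact ⟨a, hψa⟩)
  have hG : ∀ χ' : MulChar F ℂ, Gsum p F χ' = gaussSum χ' ψ := by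
    intro χ'
    unfold Gsum gaussSum
    refine Finset.sum_congr rfl fun α _ => ?_
    congr 1
    rw [hψdef]
    simp only [AddChar.compAddMonoidHom_apply, LinearMap.toAddMonoidHom_coe]
    rw [AddChar.zmodChar_apply, hzdef, ← Complex.exp_nat_mul]
    congr 1
    ring
  simp only [hG]
  exact master hm hf hcard hlf χ hχ ψ hψprim
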